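/- Let U: ℤ⁴ → ℤ⁴ be the linear map given by the matrix with rows (−1, 0, −2, 1), (0, −1, −3, 0), (1, 0, 2, 0), (0, 1, 2, 0). Then the image under U of the semigroup S = ω ∩ ℤ⁴ equals the additive subsemigroup S_A of ℤ⁴ generated by the set 𝒢 = {h₁, h₂, h₃, h₄, h₅, h₆, h₇, h₄−h₁, h₆−h₁, h₇−h₁, h₄−h₂, h₇−h₂, h₄−h₃, h₆−h₃, h₇−h₃, h₄−h₅, h₆−h₅}; that is, U(S) = S_A. -/

import Mathlib

set_option maxHeartbeats 1000000


/-- The seven lattice points `h₁, …, h₇` (0-indexed as `h 0, …, h 6`). -/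
def h : Fin 7 → (Fin 4 → ℤ) :=
  ![![1,0,0,0], ![0,1,0,0], ![0,0,1,0], ![0,0,0,1],
    ![2,3,-2,-1], ![1,3,-1,-1], ![1,2,-1,0]]

/-- Coercion of an integer vector to a real vector. -/
def toR (v : Fin 4 → ℤ) : Fin 4 → ℝ := fun j => (v j : ℝ)

/-- The convex cone generated by a finite family of vectors in `ℝ⁴`. -/
def cone {n : ℕ} (v : Fin n → (Fin 4 → ℝ)) : Set (Fin 4 → ℝ) :=
  {x | ∃ lam : Fin n → ℝ, (∀ i, 0 ≤ lam i) ∧ x = ∑ i, lam i • v i}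

/-- The cone `ω` generated by `h₁, …, h₆`. -/
def ω : Set (Fin 4 → ℝ) := cone (fun i : Fin 6 => toR (h i.castSucc))

/-- The semigroup `S = ω ∩ ℤ⁴`. -/
def S : Set (Fin 4 → ℤ) := {v | toR v ∈ ω}

/-- The matrix `U` (acting on column vectors). -/
def U : Matrix (Fin 4) (Fin 4) ℤ :=
  !![-1, 0, -2, 1;
      0, -1, -3, 0;
      1, 0, 2, 0;
      0, 1, 2, 0]

/-- The generating set `𝒢`. -/
def G : Set (Fin 4 → ℤ) :=
  {h 0, h 1, h 2, h 3, h 4, h 5, h 6,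
   h 3 - h 0, h 5 - h 0, h 6 - h 0,
   h 3 - h 1, h 6 - h 1,
   h 3 - h 2, h 5 - h 2, h 6 - h 2,
   h 3 - h 4, h 5 - h 4}


set_option maxHeartbeats 1600000 in
private theorem key (x0 x1 x2 x3 : ℤ)
    (h1 : 0 ≤ x1 + x2 + x3) (h2 : 0 ≤ 3*x0 + 2*x1 + 3*x2 + 3*x3) (h3 : 0 ≤ x1 + 3*x3) (h4 : 0 ≤ 2*x1 + x2 + 2*x3) (h5 : 0 ≤ 2*x1 + 3*x3) (h6 : 0 ≤ x0 + 2*x1 + 2*x2 + 2*x3)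
    (hx : ¬(x0 = 0 ∧ x1 = 0 ∧ x2 = 0 ∧ x3 = 0)) :
    (0 ≤ x1 + x2 + x3 ∧ 0 ≤ 3*x0 + 2*x1 + 3*x2 + 3*x3 - 3 ∧ 0 ≤ x1 + 3*x3 ∧ 0 ≤ 2*x1 + x2 + 2*x3 ∧ 0 ≤ 2*x1 + 3*x3 ∧ 0 ≤ x0 + 2*x1 + 2*x2 + 2*x3 - 1) ∨
    (0 ≤ x1 + x2 + x3 - 1 ∧ 0 ≤ 3*x0 + 2*x1 + 3*x2 + 3*x3 - 2 ∧ 0 ≤ x1 + 3*x3 - 1 ∧ 0 ≤ 2*x1 + x2 + 2*x3 - 2 ∧ 0 ≤ 2*x1 + 3*x3 - 2 ∧ 0 ≤ x0 + 2*x1 + 2*x2 + 2*x3 - 2) ∨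
    (0 ≤ x1 + x2 + x3 - 1 ∧ 0 ≤ 3*x0 + 2*x1 + 3*x2 + 3*x3 - 3 ∧ 0 ≤ x1 + 3*x3 ∧ 0 ≤ 2*x1 + x2 + 2*x3 - 1 ∧ 0 ≤ 2*x1 + 3*x3 ∧ 0 ≤ x0 + 2*x1 + 2*x2 + 2*x3 - 2) ∨
    (0 ≤ x1 + x2 + x3 - 1 ∧ 0 ≤ 3*x0 + 2*x1 + 3*x2 + 3*x3 - 3 ∧ 0 ≤ x1 + 3*x3 - 3 ∧ 0 ≤ 2*x1 + x2 + 2*x3 - 2 ∧ 0 ≤ 2*x1 + 3*x3 - 3 ∧ 0 ≤ x0 + 2*x1 + 2*x2 + 2*x3 - 2) ∨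
    (0 ≤ x1 + x2 + x3 ∧ 0 ≤ 3*x0 + 2*x1 + 3*x2 + 3*x3 - 3 ∧ 0 ≤ x1 + 3*x3 ∧ 0 ≤ 2*x1 + x2 + 2*x3 - 2 ∧ 0 ≤ 2*x1 + 3*x3 - 3 ∧ 0 ≤ x0 + 2*x1 + 2*x2 + 2*x3 - 2) ∨
    (0 ≤ x1 + x2 + x3 - 1 ∧ 0 ≤ 3*x0 + 2*x1 + 3*x2 + 3*x3 - 3 ∧ 0 ≤ x1 + 3*x3 ∧ 0 ≤ 2*x1 + x2 + 2*x3 - 3 ∧ 0 ≤ 2*x1 + 3*x3 - 3 ∧ 0 ≤ x0 + 2*x1 + 2*x2 + 2*x3 - 3) ∨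
    (0 ≤ x1 + x2 + x3 - 1 ∧ 0 ≤ 3*x0 + 2*x1 + 3*x2 + 3*x3 - 4 ∧ 0 ≤ x1 + 3*x3 - 2 ∧ 0 ≤ 2*x1 + x2 + 2*x3 - 3 ∧ 0 ≤ 2*x1 + 3*x3 - 4 ∧ 0 ≤ x0 + 2*x1 + 2*x2 + 2*x3 - 3) ∨
    (0 ≤ x1 + x2 + x3 - 1 ∧ 0 ≤ 3*x0 + 2*x1 + 3*x2 + 3*x3 ∧ 0 ≤ x1 + 3*x3 - 3 ∧ 0 ≤ 2*x1 + x2 + 2*x3 - 2 ∧ 0 ≤ 2*x1 + 3*x3 - 3 ∧ 0 ≤ x0 + 2*x1 + 2*x2 + 2*x3 - 1) ∨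
    (0 ≤ x1 + x2 + x3 - 1 ∧ 0 ≤ 3*x0 + 2*x1 + 3*x2 + 3*x3 ∧ 0 ≤ x1 + 3*x3 ∧ 0 ≤ 2*x1 + x2 + 2*x3 - 3 ∧ 0 ≤ 2*x1 + 3*x3 - 3 ∧ 0 ≤ x0 + 2*x1 + 2*x2 + 2*x3 - 2) ∨
    (0 ≤ x1 + x2 + x3 - 1 ∧ 0 ≤ 3*x0 + 2*x1 + 3*x2 + 3*x3 - 1 ∧ 0 ≤ x1 + 3*x3 - 2 ∧ 0 ≤ 2*x1 + x2 + 2*x3 - 3 ∧ 0 ≤ 2*x1 + 3*x3 - 4 ∧ 0 ≤ x0 + 2*x1 + 2*x2 + 2*x3 - 2) ∨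
    (0 ≤ x1 + x2 + x3 ∧ 0 ≤ 3*x0 + 2*x1 + 3*x2 + 3*x3 - 1 ∧ 0 ≤ x1 + 3*x3 - 2 ∧ 0 ≤ 2*x1 + x2 + 2*x3 ∧ 0 ≤ 2*x1 + 3*x3 - 1 ∧ 0 ≤ x0 + 2*x1 + 2*x2 + 2*x3) ∨
    (0 ≤ x1 + x2 + x3 ∧ 0 ≤ 3*x0 + 2*x1 + 3*x2 + 3*x3 - 2 ∧ 0 ≤ x1 + 3*x3 - 1 ∧ 0 ≤ 2*x1 + x2 + 2*x3 - 1 ∧ 0 ≤ 2*x1 + 3*x3 - 2 ∧ 0 ≤ x0 + 2*x1 + 2*x2 + 2*x3 - 1) ∨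
    (0 ≤ x1 + x2 + x3 ∧ 0 ≤ 3*x0 + 2*x1 + 3*x2 + 3*x3 ∧ 0 ≤ x1 + 3*x3 - 3 ∧ 0 ≤ 2*x1 + x2 + 2*x3 - 1 ∧ 0 ≤ 2*x1 + 3*x3 - 3 ∧ 0 ≤ x0 + 2*x1 + 2*x2 + 2*x3) ∨
    (0 ≤ x1 + x2 + x3 ∧ 0 ≤ 3*x0 + 2*x1 + 3*x2 + 3*x3 ∧ 0 ≤ x1 + 3*x3 ∧ 0 ≤ 2*x1 + x2 + 2*x3 - 2 ∧ 0 ≤ 2*x1 + 3*x3 - 3 ∧ 0 ≤ x0 + 2*x1 + 2*x2 + 2*x3 - 1) ∨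
    (0 ≤ x1 + x2 + x3 ∧ 0 ≤ 3*x0 + 2*x1 + 3*x2 + 3*x3 - 1 ∧ 0 ≤ x1 + 3*x3 - 2 ∧ 0 ≤ 2*x1 + x2 + 2*x3 - 2 ∧ 0 ≤ 2*x1 + 3*x3 - 4 ∧ 0 ≤ x0 + 2*x1 + 2*x2 + 2*x3 - 1) ∨
    (0 ≤ x1 + x2 + x3 - 1 ∧ 0 ≤ 3*x0 + 2*x1 + 3*x2 + 3*x3 ∧ 0 ≤ x1 + 3*x3 - 3 ∧ 0 ≤ 2*x1 + x2 + 2*x3 ∧ 0 ≤ 2*x1 + 3*x3 ∧ 0 ≤ x0 + 2*x1 + 2*x2 + 2*x3) ∨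
    (0 ≤ x1 + x2 + x3 - 1 ∧ 0 ≤ 3*x0 + 2*x1 + 3*x2 + 3*x3 ∧ 0 ≤ x1 + 3*x3 ∧ 0 ≤ 2*x1 + x2 + 2*x3 - 1 ∧ 0 ≤ 2*x1 + 3*x3 ∧ 0 ≤ x0 + 2*x1 + 2*x2 + 2*x3 - 1) := by
  rcases le_or_gt 1 (x0 + 2*x1 + 2*x2 + 2*x3) with hc1 | hc1
  ·
    rcases le_or_gt 1 (2*x1 + x2 + 2*x3) with hc2 | hc2
    ·
      rcases le_or_gt 1 (x1 + x2 + x3) with hc3 | hc3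
      ·
        exact Or.inr (Or.inr (Or.inr (Or.inr (Or.inr (Or.inr (Or.inr (Or.inr (Or.inr (Or.inr (Or.inr (Or.inr (Or.inr (Or.inr (Or.inr (Or.inr ((by omega)))))))))))))))))
      ·
        rcases le_or_gt 2 (2*x1 + 3*x3) with hc4 | hc4
        ·
          rcases le_or_gt 1 (x1 + 3*x3) with hc5 | hc5
          ·
            rcases le_or_gt 2 (3*x0 + 2*x1 + 3*x2 + 3*x3) with hc6 | hc6
            ·
              exact Or.inr (Or.inr (Or.inr (Or.inr (Or.inr (Or.inr (Or.inr (Or.inr (Or.inr (Or.inr (Or.inr (Or.inl (by omega))))))))))))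
            ·
              rcases le_or_gt 2 (2*x1 + x2 + 2*x3) with hc7 | hc7
              ·
                rcases le_or_gt 3 (2*x1 + 3*x3) with hc8 | hc8
                ·
                  exact Or.inr (Or.inr (Or.inr (Or.inr (Or.inr (Or.inr (Or.inr (Or.inr (Or.inr (Or.inr (Or.inr (Or.inr (Or.inr (Or.inl (by omega))))))))))))))
                ·
                  exfalso; omega
              ·
                exfalso; omega
          ·
            rcases le_or_gt 2 (2*x1 + x2 + 2*x3) with hc6 | hc6
            ·
              rcases le_or_gt 3 (2*x1 + 3*x3) with hc7 | hc7
              ·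
                exact Or.inr (Or.inr (Or.inr (Or.inr (Or.inr (Or.inr (Or.inr (Or.inr (Or.inr (Or.inr (Or.inr (Or.inr (Or.inr (Or.inl (by omega))))))))))))))
              ·
                exfalso; omega
            ·
              exfalso; omega
        ·
          exfalso; omega
    ·
      rcases le_or_gt 3 (3*x0 + 2*x1 + 3*x2 + 3*x3) with hc3 | hc3
      ·
        exact Or.inl (by omega)
      ·
        exfalso; omega
  ·
    rcases le_or_gt 3 (x1 + 3*x3) with hc2 | hc2
    ·
      rcases le_or_gt 3 (2*x1 + 3*x3) with hc3 | hc3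
      ·
        rcases le_or_gt 1 (2*x1 + x2 + 2*x3) with hc4 | hc4
        ·
          exact Or.inr (Or.inr (Or.inr (Or.inr (Or.inr (Or.inr (Or.inr (Or.inr (Or.inr (Or.inr (Or.inr (Or.inr (Or.inl (by omega)))))))))))))
        ·
          rcases le_or_gt 1 (3*x0 + 2*x1 + 3*x2 + 3*x3) with hc5 | hc5
          ·
            exact Or.inr (Or.inr (Or.inr (Or.inr (Or.inr (Or.inr (Or.inr (Or.inr (Or.inr (Or.inr (Or.inl (by omega)))))))))))
          ·
            exfalso; omega
      ·
        rcases le_or_gt 1 (x1 + x2 + x3) with hc4 | hc4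
        ·
          exact Or.inr (Or.inr (Or.inr (Or.inr (Or.inr (Or.inr (Or.inr (Or.inr (Or.inr (Or.inr (Or.inr (Or.inr (Or.inr (Or.inr (Or.inr (Or.inl (by omega))))))))))))))))
        ·
          rcases le_or_gt 1 (3*x0 + 2*x1 + 3*x2 + 3*x3) with hc5 | hc5
          ·
            rcases le_or_gt 1 (2*x1 + 3*x3) with hc6 | hc6
            ·
              exact Or.inr (Or.inr (Or.inr (Or.inr (Or.inr (Or.inr (Or.inr (Or.inr (Or.inr (Or.inr (Or.inl (by omega)))))))))))
            ·
              exfalso; omega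
          ·
            exfalso; omega
    ·
      rcases le_or_gt 1 (3*x0 + 2*x1 + 3*x2 + 3*x3) with hc3 | hc3
      ·
        rcases le_or_gt 2 (x1 + 3*x3) with hc4 | hc4
        ·
          rcases le_or_gt 1 (2*x1 + 3*x3) with hc5 | hc5
          ·
            exact Or.inr (Or.inr (Or.inr (Or.inr (Or.inr (Or.inr (Or.inr (Or.inr (Or.inr (Or.inr (Or.inl (by omega)))))))))))
          ·
            exfalso; omega
        ·
          exfalso; omega
      ·
        exfalso; omega


lemma cs2 : (2:Fin 6).castSucc = (2:Fin 7) := rfl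
lemma cs3 : (3:Fin 6).castSucc = (3:Fin 7) := rfl
lemma cs4 : (4:Fin 6).castSucc = (4:Fin 7) := rfl
lemma cs5 : (5:Fin 6).castSucc = (5:Fin 7) := rfl
lemma hv0 : h 0 = ![1,0,0,0] := rfl
lemma hv1 : h 1 = ![0,1,0,0] := rfl
lemma hv2 : h 2 = ![0,0,1,0] := rfl
lemma hv3 : h 3 = ![0,0,0,1] := rfl
lemma hv4 : h 4 = ![2,3,-2,-1] := rfl
lemma hv5 : h 5 = ![1,3,-1,-1] := rfl
lemma hv6 : h 6 = ![1,2,-1,0] := rfl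

lemma mem_S_iff (w : Fin 4 → ℤ) : w ∈ S ↔ ∃ a b c d e f : ℝ,
    0 ≤ a ∧ 0 ≤ b ∧ 0 ≤ c ∧ 0 ≤ d ∧ 0 ≤ e ∧ 0 ≤ f ∧
    (w 0 : ℝ) = a + 2*e + f ∧ (w 1 : ℝ) = b + 3*e + 3*f ∧
    (w 2 : ℝ) = c - 2*e - f ∧ (w 3 : ℝ) = d - e - f := by
  constructor
  · rintro ⟨lam, hn, hw⟩
    rw [Fin.sum_univ_six] at hw
    refine ⟨lam 0, lam 1, lam 2, lam 3, lam 4, lam 5,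
      hn 0, hn 1, hn 2, hn 3, hn 4, hn 5, ?_, ?_, ?_, ?_⟩ <;>
    · have h0 := congrFun hw 0; have h1 := congrFun hw 1
      have h2 := congrFun hw 2; have h3 := congrFun hw 3
      simp [toR, cs2, cs3, cs4, cs5, hv0, hv1, hv2, hv3, hv4, hv5, hv6] at h0 h1 h2 h3
      linarith
  · rintro ⟨a, b, c, d, e, f, ha, hb, hc, hd, he, hf, e0, e1, e2, e3⟩
    refine ⟨![a,b,c,d,e,f], fun i => by fin_cases i <;> simpa, ?_⟩
    rw [Fin.sum_univ_six]
    funext j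
    fin_cases j <;>
      simp [toR, cs2, cs3, cs4, cs5, hv0, hv1, hv2, hv3, hv4, hv5, hv6,
        show ∀ x y z u v t : ℝ, ![x,y,z,u,v,t] 5 = t from fun _ _ _ _ _ _ => rfl] <;>
      linarith

lemma mulVec_eq (v : Fin 4 → ℤ) :
    U.mulVec v = ![-(v 0) - 2*(v 2) + v 3, -(v 1) - 3*(v 2), v 0 + 2*(v 2), v 1 + 2*(v 2)] := by
  funext j
  fin_cases j <;>
    simp [U, Matrix.mulVec, dotProduct, Fin.sum_univ_four] <;> ring

lemma S_zero : (0 : Fin 4 → ℤ) ∈ S := by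
  rw [mem_S_iff]
  exact ⟨0,0,0,0,0,0, by norm_num⟩

lemma S_add {w u : Fin 4 → ℤ} (hw : w ∈ S) (hu : u ∈ S) : w + u ∈ S := by
  rw [mem_S_iff] at hw hu ⊢
  obtain ⟨a,b,c,d,e,f,ha,hb,hc,hd,he,hf,e0,e1,e2,e3⟩ := hw
  obtain ⟨a',b',c',d',e',f',ha',hb',hc',hd',he',hf',e0',e1',e2',e3'⟩ := hu
  refine ⟨a+a',b+b',c+c',d+d',e+e',f+f', by linarith, by linarith, by linarith,
    by linarith, by linarith, by linarith, ?_, ?_, ?_, ?_⟩ <;>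
  · push_cast [Pi.add_apply]
    linarith

/-- The image of `S` under `U`, as an `AddSubmonoid`. -/
def M : AddSubmonoid (Fin 4 → ℤ) where
  carrier := (fun v => U.mulVec v) '' S
  zero_mem' := ⟨0, S_zero, by simp [Matrix.mulVec_zero]⟩
  add_mem' := by
    rintro _ _ ⟨p, hp, rfl⟩ ⟨q, hq, rfl⟩
    exact ⟨p + q, S_add hp hq, by simp [Matrix.mulVec_add]⟩


private lemma mem_closure_aux : ∀ n : ℕ, ∀ a b c d : ℤ,
    0 ≤ b + c + d → 0 ≤ 3*a + 2*b + 3*c + 3*d → 0 ≤ b + 3*d →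
    0 ≤ 2*b + c + 2*d → 0 ≤ 2*b + 3*d → 0 ≤ a + 2*b + 2*c + 2*d →
    4*a + 10*b + 7*c + 14*d ≤ (n : ℤ) →
    (![a,b,c,d] : Fin 4 → ℤ) ∈ AddSubmonoid.closure G := by
  intro n
  induction n with
  | zero =>
    intro a b c d h1 h2 h3 h4 h5 h6 hm
    have hz : a = 0 ∧ b = 0 ∧ c = 0 ∧ d = 0 := by omega
    obtain ⟨rfl, rfl, rfl, rfl⟩ := hz
    have : (![(0:ℤ),0,0,0] : Fin 4 → ℤ) = 0 := by funext j; fin_cases j <;> rfl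
    rw [this]; exact zero_mem _
  | succ n ih =>
    intro a b c d h1 h2 h3 h4 h5 h6 hm
    by_cases h0 : a = 0 ∧ b = 0 ∧ c = 0 ∧ d = 0
    · obtain ⟨rfl, rfl, rfl, rfl⟩ := h0
      have : (![(0:ℤ),0,0,0] : Fin 4 → ℤ) = 0 := by funext j; fin_cases j <;> rfl
      rw [this]; exact zero_mem _
    rcases key a b c d h1 h2 h3 h4 h5 h6 h0 with
      H|H|H|H|H|H|H|H|H|H|H|H|H|H|H|H|H
    · have heq : (![a,b,c,d] : Fin 4 → ℤ) = (h 0) + ![a - (1), b - (0), c - (0), d - (0)] := by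
        funext j; fin_cases j <;> simp [hv0,hv1,hv2,hv3,hv4,hv5,hv6]
      rw [heq]
      exact add_mem (AddSubmonoid.subset_closure (show h 0 ∈ G from Set.mem_insert _ _))
        (ih (a - (1)) (b - (0)) (c - (0)) (d - (0))
          (by omega) (by omega) (by omega) (by omega) (by omega) (by omega) (by omega))
    · have heq : (![a,b,c,d] : Fin 4 → ℤ) = (h 1) + ![a - (0), b - (1), c - (0), d - (0)] := by
        funext j; fin_cases j <;> simp [hv0,hv1,hv2,hv3,hv4,hv5,hv6]
      rw [heq]
      exact add_mem (AddSubmonoid.subset_closure (show h 1 ∈ G from Set.mem_insert_of_mem _ (Set.mem_insert _ _)))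
        (ih (a - (0)) (b - (1)) (c - (0)) (d - (0))
          (by omega) (by omega) (by omega) (by omega) (by omega) (by omega) (by omega))
    · have heq : (![a,b,c,d] : Fin 4 → ℤ) = (h 2) + ![a - (0), b - (0), c - (1), d - (0)] := by
        funext j; fin_cases j <;> simp [hv0,hv1,hv2,hv3,hv4,hv5,hv6]
      rw [heq]
      exact add_mem (AddSubmonoid.subset_closure (show h 2 ∈ G from Set.mem_insert_of_mem _ (Set.mem_insert_of_mem _ (Set.mem_insert _ _))))
        (ih (a - (0)) (b - (0)) (c - (1)) (d - (0))
          (by omega) (by omega) (by omega) (by omega) (by omega) (by omega) (by omega))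
    · have heq : (![a,b,c,d] : Fin 4 → ℤ) = (h 3) + ![a - (0), b - (0), c - (0), d - (1)] := by
        funext j; fin_cases j <;> simp [hv0,hv1,hv2,hv3,hv4,hv5,hv6]
      rw [heq]
      exact add_mem (AddSubmonoid.subset_closure (show h 3 ∈ G from Set.mem_insert_of_mem _ (Set.mem_insert_of_mem _ (Set.mem_insert_of_mem _ (Set.mem_insert _ _)))))
        (ih (a - (0)) (b - (0)) (c - (0)) (d - (1))
          (by omega) (by omega) (by omega) (by omega) (by omega) (by omega) (by omega))
    · have heq : (![a,b,c,d] : Fin 4 → ℤ) = (h 4) + ![a - (2), b - (3), c - (-2), d - (-1)] := by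
        funext j; fin_cases j <;> simp [hv0,hv1,hv2,hv3,hv4,hv5,hv6]
      rw [heq]
      exact add_mem (AddSubmonoid.subset_closure (show h 4 ∈ G from Set.mem_insert_of_mem _ (Set.mem_insert_of_mem _ (Set.mem_insert_of_mem _ (Set.mem_insert_of_mem _ (Set.mem_insert _ _))))))
        (ih (a - (2)) (b - (3)) (c - (-2)) (d - (-1))
          (by omega) (by omega) (by omega) (by omega) (by omega) (by omega) (by omega))
    · have heq : (![a,b,c,d] : Fin 4 → ℤ) = (h 5) + ![a - (1), b - (3), c - (-1), d - (-1)] := by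
        funext j; fin_cases j <;> simp [hv0,hv1,hv2,hv3,hv4,hv5,hv6]
      rw [heq]
      exact add_mem (AddSubmonoid.subset_closure (show h 5 ∈ G from Set.mem_insert_of_mem _ (Set.mem_insert_of_mem _ (Set.mem_insert_of_mem _ (Set.mem_insert_of_mem _ (Set.mem_insert_of_mem _ (Set.mem_insert _ _)))))))
        (ih (a - (1)) (b - (3)) (c - (-1)) (d - (-1))
          (by omega) (by omega) (by omega) (by omega) (by omega) (by omega) (by omega))
    · have heq : (![a,b,c,d] : Fin 4 → ℤ) = (h 6) + ![a - (1), b - (2), c - (-1), d - (0)] := by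
        funext j; fin_cases j <;> simp [hv0,hv1,hv2,hv3,hv4,hv5,hv6]
      rw [heq]
      exact add_mem (AddSubmonoid.subset_closure (show h 6 ∈ G from Set.mem_insert_of_mem _ (Set.mem_insert_of_mem _ (Set.mem_insert_of_mem _ (Set.mem_insert_of_mem _ (Set.mem_insert_of_mem _ (Set.mem_insert_of_mem _ (Set.mem_insert _ _))))))))
        (ih (a - (1)) (b - (2)) (c - (-1)) (d - (0))
          (by omega) (by omega) (by omega) (by omega) (by omega) (by omega) (by omega))
    · have heq : (![a,b,c,d] : Fin 4 → ℤ) = (h 3 - h 0) + ![a - (-1), b - (0), c - (0), d - (1)] := by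
        funext j; fin_cases j <;> simp [hv0,hv1,hv2,hv3,hv4,hv5,hv6]
      rw [heq]
      exact add_mem (AddSubmonoid.subset_closure (show h 3 - h 0 ∈ G from Set.mem_insert_of_mem _ (Set.mem_insert_of_mem _ (Set.mem_insert_of_mem _ (Set.mem_insert_of_mem _ (Set.mem_insert_of_mem _ (Set.mem_insert_of_mem _ (Set.mem_insert_of_mem _ (Set.mem_insert _ _)))))))))
        (ih (a - (-1)) (b - (0)) (c - (0)) (d - (1))
          (by omega) (by omega) (by omega) (by omega) (by omega) (by omega) (by omega))
    · have heq : (![a,b,c,d] : Fin 4 → ℤ) = (h 5 - h 0) + ![a - (0), b - (3), c - (-1), d - (-1)] := by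
        funext j; fin_cases j <;> simp [hv0,hv1,hv2,hv3,hv4,hv5,hv6]
      rw [heq]
      exact add_mem (AddSubmonoid.subset_closure (show h 5 - h 0 ∈ G from Set.mem_insert_of_mem _ (Set.mem_insert_of_mem _ (Set.mem_insert_of_mem _ (Set.mem_insert_of_mem _ (Set.mem_insert_of_mem _ (Set.mem_insert_of_mem _ (Set.mem_insert_of_mem _ (Set.mem_insert_of_mem _ (Set.mem_insert _ _))))))))))
        (ih (a - (0)) (b - (3)) (c - (-1)) (d - (-1))
          (by omega) (by omega) (by omega) (by omega) (by omega) (by omega) (by omega))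
    · have heq : (![a,b,c,d] : Fin 4 → ℤ) = (h 6 - h 0) + ![a - (0), b - (2), c - (-1), d - (0)] := by
        funext j; fin_cases j <;> simp [hv0,hv1,hv2,hv3,hv4,hv5,hv6]
      rw [heq]
      exact add_mem (AddSubmonoid.subset_closure (show h 6 - h 0 ∈ G from Set.mem_insert_of_mem _ (Set.mem_insert_of_mem _ (Set.mem_insert_of_mem _ (Set.mem_insert_of_mem _ (Set.mem_insert_of_mem _ (Set.mem_insert_of_mem _ (Set.mem_insert_of_mem _ (Set.mem_insert_of_mem _ (Set.mem_insert_of_mem _ (Set.mem_insert _ _)))))))))))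
        (ih (a - (0)) (b - (2)) (c - (-1)) (d - (0))
          (by omega) (by omega) (by omega) (by omega) (by omega) (by omega) (by omega))
    · have heq : (![a,b,c,d] : Fin 4 → ℤ) = (h 3 - h 1) + ![a - (0), b - (-1), c - (0), d - (1)] := by
        funext j; fin_cases j <;> simp [hv0,hv1,hv2,hv3,hv4,hv5,hv6]
      rw [heq]
      exact add_mem (AddSubmonoid.subset_closure (show h 3 - h 1 ∈ G from Set.mem_insert_of_mem _ (Set.mem_insert_of_mem _ (Set.mem_insert_of_mem _ (Set.mem_insert_of_mem _ (Set.mem_insert_of_mem _ (Set.mem_insert_of_mem _ (Set.mem_insert_of_mem _ (Set.mem_insert_of_mem _ (Set.mem_insert_of_mem _ (Set.mem_insert_of_mem _ (Set.mem_insert _ _))))))))))))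
        (ih (a - (0)) (b - (-1)) (c - (0)) (d - (1))
          (by omega) (by omega) (by omega) (by omega) (by omega) (by omega) (by omega))
    · have heq : (![a,b,c,d] : Fin 4 → ℤ) = (h 6 - h 1) + ![a - (1), b - (1), c - (-1), d - (0)] := by
        funext j; fin_cases j <;> simp [hv0,hv1,hv2,hv3,hv4,hv5,hv6]
      rw [heq]
      exact add_mem (AddSubmonoid.subset_closure (show h 6 - h 1 ∈ G from Set.mem_insert_of_mem _ (Set.mem_insert_of_mem _ (Set.mem_insert_of_mem _ (Set.mem_insert_of_mem _ (Set.mem_insert_of_mem _ (Set.mem_insert_of_mem _ (Set.mem_insert_of_mem _ (Set.mem_insert_of_mem _ (Set.mem_insert_of_mem _ (Set.mem_insert_of_mem _ (Set.mem_insert_of_mem _ (Set.mem_insert _ _)))))))))))))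
        (ih (a - (1)) (b - (1)) (c - (-1)) (d - (0))
          (by omega) (by omega) (by omega) (by omega) (by omega) (by omega) (by omega))
    · have heq : (![a,b,c,d] : Fin 4 → ℤ) = (h 3 - h 2) + ![a - (0), b - (0), c - (-1), d - (1)] := by
        funext j; fin_cases j <;> simp [hv0,hv1,hv2,hv3,hv4,hv5,hv6]
      rw [heq]
      exact add_mem (AddSubmonoid.subset_closure (show h 3 - h 2 ∈ G from Set.mem_insert_of_mem _ (Set.mem_insert_of_mem _ (Set.mem_insert_of_mem _ (Set.mem_insert_of_mem _ (Set.mem_insert_of_mem _ (Set.mem_insert_of_mem _ (Set.mem_insert_of_mem _ (Set.mem_insert_of_mem _ (Set.mem_insert_of_mem _ (Set.mem_insert_of_mem _ (Set.mem_insert_of_mem _ (Set.mem_insert_of_mem _ (Set.mem_insert _ _))))))))))))))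
        (ih (a - (0)) (b - (0)) (c - (-1)) (d - (1))
          (by omega) (by omega) (by omega) (by omega) (by omega) (by omega) (by omega))
    · have heq : (![a,b,c,d] : Fin 4 → ℤ) = (h 5 - h 2) + ![a - (1), b - (3), c - (-2), d - (-1)] := by
        funext j; fin_cases j <;> simp [hv0,hv1,hv2,hv3,hv4,hv5,hv6]
      rw [heq]
      exact add_mem (AddSubmonoid.subset_closure (show h 5 - h 2 ∈ G from Set.mem_insert_of_mem _ (Set.mem_insert_of_mem _ (Set.mem_insert_of_mem _ (Set.mem_insert_of_mem _ (Set.mem_insert_of_mem _ (Set.mem_insert_of_mem _ (Set.mem_insert_of_mem _ (Set.mem_insert_of_mem _ (Set.mem_insert_of_mem _ (Set.mem_insert_of_mem _ (Set.mem_insert_of_mem _ (Set.mem_insert_of_mem _ (Set.mem_insert_of_mem _ (Set.mem_insert _ _)))))))))))))))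
        (ih (a - (1)) (b - (3)) (c - (-2)) (d - (-1))
          (by omega) (by omega) (by omega) (by omega) (by omega) (by omega) (by omega))
    · have heq : (![a,b,c,d] : Fin 4 → ℤ) = (h 6 - h 2) + ![a - (1), b - (2), c - (-2), d - (0)] := by
        funext j; fin_cases j <;> simp [hv0,hv1,hv2,hv3,hv4,hv5,hv6]
      rw [heq]
      exact add_mem (AddSubmonoid.subset_closure (show h 6 - h 2 ∈ G from Set.mem_insert_of_mem _ (Set.mem_insert_of_mem _ (Set.mem_insert_of_mem _ (Set.mem_insert_of_mem _ (Set.mem_insert_of_mem _ (Set.mem_insert_of_mem _ (Set.mem_insert_of_mem _ (Set.mem_insert_of_mem _ (Set.mem_insert_of_mem _ (Set.mem_insert_of_mem _ (Set.mem_insert_of_mem _ (Set.mem_insert_of_mem _ (Set.mem_insert_of_mem _ (Set.mem_insert_of_mem _ (Set.mem_insert _ _))))))))))))))))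
        (ih (a - (1)) (b - (2)) (c - (-2)) (d - (0))
          (by omega) (by omega) (by omega) (by omega) (by omega) (by omega) (by omega))
    · have heq : (![a,b,c,d] : Fin 4 → ℤ) = (h 3 - h 4) + ![a - (-2), b - (-3), c - (2), d - (2)] := by
        funext j; fin_cases j <;> simp [hv0,hv1,hv2,hv3,hv4,hv5,hv6]
      rw [heq]
      exact add_mem (AddSubmonoid.subset_closure (show h 3 - h 4 ∈ G from Set.mem_insert_of_mem _ (Set.mem_insert_of_mem _ (Set.mem_insert_of_mem _ (Set.mem_insert_of_mem _ (Set.mem_insert_of_mem _ (Set.mem_insert_of_mem _ (Set.mem_insert_of_mem _ (Set.mem_insert_of_mem _ (Set.mem_insert_of_mem _ (Set.mem_insert_of_mem _ (Set.mem_insert_of_mem _ (Set.mem_insert_of_mem _ (Set.mem_insert_of_mem _ (Set.mem_insert_of_mem _ (Set.mem_insert_of_mem _ (Set.mem_insert _ _)))))))))))))))))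
        (ih (a - (-2)) (b - (-3)) (c - (2)) (d - (2))
          (by omega) (by omega) (by omega) (by omega) (by omega) (by omega) (by omega))
    · have heq : (![a,b,c,d] : Fin 4 → ℤ) = (h 5 - h 4) + ![a - (-1), b - (0), c - (1), d - (0)] := by
        funext j; fin_cases j <;> simp [hv0,hv1,hv2,hv3,hv4,hv5,hv6]
      rw [heq]
      exact add_mem (AddSubmonoid.subset_closure (show h 5 - h 4 ∈ G from Set.mem_insert_of_mem _ (Set.mem_insert_of_mem _ (Set.mem_insert_of_mem _ (Set.mem_insert_of_mem _ (Set.mem_insert_of_mem _ (Set.mem_insert_of_mem _ (Set.mem_insert_of_mem _ (Set.mem_insert_of_mem _ (Set.mem_insert_of_mem _ (Set.mem_insert_of_mem _ (Set.mem_insert_of_mem _ (Set.mem_insert_of_mem _ (Set.mem_insert_of_mem _ (Set.mem_insert_of_mem _ (Set.mem_insert_of_mem _ (Set.mem_insert_of_mem _ (Set.mem_singleton _))))))))))))))))))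
        (ih (a - (-1)) (b - (0)) (c - (1)) (d - (0))
          (by omega) (by omega) (by omega) (by omega) (by omega) (by omega) (by omega))

private lemma mem_closure_of (a b c d : ℤ)
    (h1 : 0 ≤ b + c + d) (h2 : 0 ≤ 3*a + 2*b + 3*c + 3*d) (h3 : 0 ≤ b + 3*d)
    (h4 : 0 ≤ 2*b + c + 2*d) (h5 : 0 ≤ 2*b + 3*d) (h6 : 0 ≤ a + 2*b + 2*c + 2*d) :
    (![a,b,c,d] : Fin 4 → ℤ) ∈ AddSubmonoid.closure G :=
  mem_closure_aux (4*a + 10*b + 7*c + 14*d).toNat a b c d h1 h2 h3 h4 h5 h6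
    (Int.self_le_toNat _)


theorem stmt_8 :
    (fun v => U.mulVec v) '' S = (AddSubmonoid.closure G : Set (Fin 4 → ℤ)) := by
  apply Set.Subset.antisymm
  · rintro x ⟨v, hv, rfl⟩
    rw [mem_S_iff] at hv
    obtain ⟨a, b, c, d, e, f, ha, hb, hc, hd, he, hf, e0, e1, e2, e3⟩ := hv
    show U.mulVec v ∈ _
    rw [mulVec_eq]
    exact mem_closure_of _ _ _ _
      (by have hr : (0:ℝ) ≤ (-(v 1:ℝ) - 3*(v 2:ℝ)) + ((v 0:ℝ) + 2*(v 2:ℝ)) + ((v 1:ℝ) + 2*(v 2:ℝ)) := by linarith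
          have hr2 : (0:ℝ) ≤ (((-(v 1) - 3*(v 2)) + (v 0 + 2*(v 2)) + (v 1 + 2*(v 2)) : ℤ) : ℝ) := by push_cast; linarith
          exact_mod_cast hr2)
      (by have hr : (0:ℝ) ≤ 3*(-(v 0:ℝ) - 2*(v 2:ℝ) + (v 3:ℝ)) + 2*(-(v 1:ℝ) - 3*(v 2:ℝ)) + 3*((v 0:ℝ) + 2*(v 2:ℝ)) + 3*((v 1:ℝ) + 2*(v 2:ℝ)) := by linarith
          have hr2 : (0:ℝ) ≤ ((3*(-(v 0) - 2*(v 2) + v 3) + 2*(-(v 1) - 3*(v 2)) + 3*(v 0 + 2*(v 2)) + 3*(v 1 + 2*(v 2)) : ℤ) : ℝ) := by push_cast; linarith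
          exact_mod_cast hr2)
      (by have hr : (0:ℝ) ≤ (-(v 1:ℝ) - 3*(v 2:ℝ)) + 3*((v 1:ℝ) + 2*(v 2:ℝ)) := by linarith
          have hr2 : (0:ℝ) ≤ (((-(v 1) - 3*(v 2)) + 3*(v 1 + 2*(v 2)) : ℤ) : ℝ) := by push_cast; linarith
          exact_mod_cast hr2)
      (by have hr : (0:ℝ) ≤ 2*(-(v 1:ℝ) - 3*(v 2:ℝ)) + ((v 0:ℝ) + 2*(v 2:ℝ)) + 2*((v 1:ℝ) + 2*(v 2:ℝ)) := by linarith
          have hr2 : (0:ℝ) ≤ ((2*(-(v 1) - 3*(v 2)) + (v 0 + 2*(v 2)) + 2*(v 1 + 2*(v 2)) : ℤ) : ℝ) := by push_cast; linarith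
          exact_mod_cast hr2)
      (by have hr : (0:ℝ) ≤ 2*(-(v 1:ℝ) - 3*(v 2:ℝ)) + 3*((v 1:ℝ) + 2*(v 2:ℝ)) := by linarith
          have hr2 : (0:ℝ) ≤ ((2*(-(v 1) - 3*(v 2)) + 3*(v 1 + 2*(v 2)) : ℤ) : ℝ) := by push_cast; linarith
          exact_mod_cast hr2)
      (by have hr : (0:ℝ) ≤ (-(v 0:ℝ) - 2*(v 2:ℝ) + (v 3:ℝ)) + 2*(-(v 1:ℝ) - 3*(v 2:ℝ)) + 2*((v 0:ℝ) + 2*(v 2:ℝ)) + 2*((v 1:ℝ) + 2*(v 2:ℝ)) := by linarith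
          have hr2 : (0:ℝ) ≤ (((-(v 0) - 2*(v 2) + v 3) + 2*(-(v 1) - 3*(v 2)) + 2*(v 0 + 2*(v 2)) + 2*(v 1 + 2*(v 2)) : ℤ) : ℝ) := by push_cast; linarith
          exact_mod_cast hr2)
  · have hGM : G ⊆ (M : Set (Fin 4 → ℤ)) := by
      intro g hg
      simp only [G, Set.mem_insert_iff, Set.mem_singleton_iff] at hg
      rcases hg with rfl|rfl|rfl|rfl|rfl|rfl|rfl|rfl|rfl|rfl|rfl|rfl|rfl|rfl|rfl|rfl|rfl
      · exact ⟨![(0:ℤ),(0:ℤ),(0:ℤ),(1:ℤ)], (mem_S_iff _).2 ⟨0, 0, 0, 1, 0, 0, by norm_num [Matrix.cons_val_two, Matrix.cons_val_three]⟩,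
          by show U.mulVec _ = _; rw [mulVec_eq]; funext j; fin_cases j <;> simp [hv0,hv1,hv2,hv3,hv4,hv5,hv6]⟩
      · exact ⟨![(2:ℤ),(2:ℤ),(-1:ℤ),(0:ℤ)], (mem_S_iff _).2 ⟨1, (1/2 : ℝ), 0, (1/2 : ℝ), (1/2 : ℝ), 0, by norm_num [Matrix.cons_val_two, Matrix.cons_val_three]⟩,
          by show U.mulVec _ = _; rw [mulVec_eq]; funext j; fin_cases j <;> simp [hv0,hv1,hv2,hv3,hv4,hv5,hv6]⟩
      · exact ⟨![(1:ℤ),(0:ℤ),(0:ℤ),(1:ℤ)], (mem_S_iff _).2 ⟨1, 0, 0, 1, 0, 0, by norm_num [Matrix.cons_val_two, Matrix.cons_val_three]⟩,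
          by show U.mulVec _ = _; rw [mulVec_eq]; funext j; fin_cases j <;> simp [hv0,hv1,hv2,hv3,hv4,hv5,hv6]⟩
      · exact ⟨![(2:ℤ),(3:ℤ),(-1:ℤ),(0:ℤ)], (mem_S_iff _).2 ⟨1, (3/2 : ℝ), 0, (1/2 : ℝ), (1/2 : ℝ), 0, by norm_num [Matrix.cons_val_two, Matrix.cons_val_three]⟩,
          by show U.mulVec _ = _; rw [mulVec_eq]; funext j; fin_cases j <;> simp [hv0,hv1,hv2,hv3,hv4,hv5,hv6]⟩
      · exact ⟨![(2:ℤ),(3:ℤ),(-2:ℤ),(0:ℤ)], (mem_S_iff _).2 ⟨0, 0, 0, 1, 1, 0, by norm_num [Matrix.cons_val_two, Matrix.cons_val_three]⟩,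
          by show U.mulVec _ = _; rw [mulVec_eq]; funext j; fin_cases j <;> simp [hv0,hv1,hv2,hv3,hv4,hv5,hv6]⟩
      · exact ⟨![(3:ℤ),(3:ℤ),(-2:ℤ),(0:ℤ)], (mem_S_iff _).2 ⟨1, 0, 0, 1, 1, 0, by norm_num [Matrix.cons_val_two, Matrix.cons_val_three]⟩,
          by show U.mulVec _ = _; rw [mulVec_eq]; funext j; fin_cases j <;> simp [hv0,hv1,hv2,hv3,hv4,hv5,hv6]⟩
      · exact ⟨![(3:ℤ),(4:ℤ),(-2:ℤ),(0:ℤ)], (mem_S_iff _).2 ⟨1, 1, 0, 1, 1, 0, by norm_num [Matrix.cons_val_two, Matrix.cons_val_three]⟩,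
          by show U.mulVec _ = _; rw [mulVec_eq]; funext j; fin_cases j <;> simp [hv0,hv1,hv2,hv3,hv4,hv5,hv6]⟩
      · exact ⟨![(2:ℤ),(3:ℤ),(-1:ℤ),(-1:ℤ)], (mem_S_iff _).2 ⟨0, 0, 1, 0, 1, 0, by norm_num [Matrix.cons_val_two, Matrix.cons_val_three]⟩,
          by show U.mulVec _ = _; rw [mulVec_eq]; funext j; fin_cases j <;> simp [hv0,hv1,hv2,hv3,hv4,hv5,hv6]⟩
      · exact ⟨![(3:ℤ),(3:ℤ),(-2:ℤ),(-1:ℤ)], (mem_S_iff _).2 ⟨1, 0, 0, 0, 1, 0, by norm_num [Matrix.cons_val_two, Matrix.cons_val_three]⟩,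
          by show U.mulVec _ = _; rw [mulVec_eq]; funext j; fin_cases j <;> simp [hv0,hv1,hv2,hv3,hv4,hv5,hv6]⟩
      · exact ⟨![(3:ℤ),(4:ℤ),(-2:ℤ),(-1:ℤ)], (mem_S_iff _).2 ⟨1, 1, 0, 0, 1, 0, by norm_num [Matrix.cons_val_two, Matrix.cons_val_three]⟩,
          by show U.mulVec _ = _; rw [mulVec_eq]; funext j; fin_cases j <;> simp [hv0,hv1,hv2,hv3,hv4,hv5,hv6]⟩
      · exact ⟨![(0:ℤ),(1:ℤ),(0:ℤ),(0:ℤ)], (mem_S_iff _).2 ⟨0, 1, 0, 0, 0, 0, by norm_num [Matrix.cons_val_two, Matrix.cons_val_three]⟩,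
          by show U.mulVec _ = _; rw [mulVec_eq]; funext j; fin_cases j <;> simp [hv0,hv1,hv2,hv3,hv4,hv5,hv6]⟩
      · exact ⟨![(1:ℤ),(2:ℤ),(-1:ℤ),(0:ℤ)], (mem_S_iff _).2 ⟨0, (1/2 : ℝ), 0, (1/2 : ℝ), (1/2 : ℝ), 0, by norm_num [Matrix.cons_val_two, Matrix.cons_val_three]⟩,
          by show U.mulVec _ = _; rw [mulVec_eq]; funext j; fin_cases j <;> simp [hv0,hv1,hv2,hv3,hv4,hv5,hv6]⟩
      · exact ⟨![(1:ℤ),(3:ℤ),(-1:ℤ),(-1:ℤ)], (mem_S_iff _).2 ⟨0, 0, 0, 0, 0, 1, by norm_num [Matrix.cons_val_two, Matrix.cons_val_three]⟩,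
          by show U.mulVec _ = _; rw [mulVec_eq]; funext j; fin_cases j <;> simp [hv0,hv1,hv2,hv3,hv4,hv5,hv6]⟩
      · exact ⟨![(2:ℤ),(3:ℤ),(-2:ℤ),(-1:ℤ)], (mem_S_iff _).2 ⟨0, 0, 0, 0, 1, 0, by norm_num [Matrix.cons_val_two, Matrix.cons_val_three]⟩,
          by show U.mulVec _ = _; rw [mulVec_eq]; funext j; fin_cases j <;> simp [hv0,hv1,hv2,hv3,hv4,hv5,hv6]⟩
      · exact ⟨![(2:ℤ),(4:ℤ),(-2:ℤ),(-1:ℤ)], (mem_S_iff _).2 ⟨0, 1, 0, 0, 1, 0, by norm_num [Matrix.cons_val_two, Matrix.cons_val_three]⟩,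
          by show U.mulVec _ = _; rw [mulVec_eq]; funext j; fin_cases j <;> simp [hv0,hv1,hv2,hv3,hv4,hv5,hv6]⟩
      · exact ⟨![(0:ℤ),(0:ℤ),(1:ℤ),(0:ℤ)], (mem_S_iff _).2 ⟨0, 0, 1, 0, 0, 0, by norm_num [Matrix.cons_val_two, Matrix.cons_val_three]⟩,
          by show U.mulVec _ = _; rw [mulVec_eq]; funext j; fin_cases j <;> simp [hv0,hv1,hv2,hv3,hv4,hv5,hv6]⟩
      · exact ⟨![(1:ℤ),(0:ℤ),(0:ℤ),(0:ℤ)], (mem_S_iff _).2 ⟨1, 0, 0, 0, 0, 0, by norm_num [Matrix.cons_val_two, Matrix.cons_val_three]⟩,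
          by show U.mulVec _ = _; rw [mulVec_eq]; funext j; fin_cases j <;> simp [hv0,hv1,hv2,hv3,hv4,hv5,hv6]⟩
    exact fun x hx => AddSubmonoid.closure_le.mpr hGM hx
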